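/- Over the rationals, with L = 4, the 12×12 block matrix [[I, 0, 0],[0, I, 0],[I, 4R_2, 9R_3]] is invertible. -/

import Mathlib

/-- Cyclic rotation matrix over ℚ, size 4. -/
def rot4 (l : ℕ) : Matrix (Fin 4) (Fin 4) ℚ :=
  Matrix.of fun i j => if (j : ℕ) = ((i : ℕ) + l) % 4 then 1 else 0

/-- 3×3 block matrix of 4×4 blocks. -/
def blk3 (B : Fin 3 → Fin 3 → Matrix (Fin 4) (Fin 4) ℚ) :
    Matrix (Fin 3 × Fin 4) (Fin 3 × Fin 4) ℚ :=
  Matrix.of fun p q => B p.1 q.1 p.2 q.2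

lemma blk3_mul (A B : Fin 3 → Fin 3 → Matrix (Fin 4) (Fin 4) ℚ) :
    blk3 A * blk3 B = blk3 (fun i k => ∑ j, A i j * B j k) := by
  ext ⟨p, i⟩ ⟨q, j⟩
  simp only [blk3, Matrix.of_apply, Matrix.mul_apply, Fintype.sum_prod_type,
    Matrix.sum_apply]

lemma blk3_one : blk3 ![![1, 0, 0], ![0, 1, 0], ![0, 0, 1]] = 1 := by
  ext ⟨p, i⟩ ⟨q, j⟩
  fin_cases p <;> fin_cases q <;>
    simp [blk3, Matrix.one_apply, Prod.ext_iff, Fin.ext_iff, Matrix.vecHead, Matrix.vecTail]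

lemma r31 : rot4 3 * rot4 1 = 1 := by
  ext i j
  fin_cases i <;> fin_cases j <;>
    norm_num [rot4, Matrix.mul_apply, Fin.sum_univ_four, Matrix.one_apply,
      show ((3:Fin 4):ℕ) = 3 from rfl, show ((2:Fin 4):ℕ) = 2 from rfl,
      show ((1:Fin 4):ℕ) = 1 from rfl] <;> decide

lemma r33 : rot4 3 * rot4 3 = rot4 2 := by
  ext i j
  fin_cases i <;> fin_cases j <;>
    norm_num [rot4, Matrix.mul_apply, Fin.sum_univ_four,
      show ((3:Fin 4):ℕ) = 3 from rfl, show ((2:Fin 4):ℕ) = 2 from rfl,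
      show ((1:Fin 4):ℕ) = 1 from rfl] <;> decide

theorem case2_invertible :
    IsUnit (blk3 ![![1, 0, 0], ![0, 1, 0], ![1, 4 • rot4 2, 9 • rot4 3]]) := by
  have h : (blk3 ![![1, 0, 0], ![0, 1, 0], ![1, 4 • rot4 2, 9 • rot4 3]]) *
      (blk3 ![![1, 0, 0], ![0, 1, 0],
        ![(-(1/9 : ℚ)) • rot4 1, (-(4/9 : ℚ)) • rot4 3, ((1/9 : ℚ)) • rot4 1]]) = 1 := by
    rw [blk3_mul]
    have e : (fun i k => ∑ j, ![![1, 0, 0], ![0, 1, 0], ![1, 4 • rot4 2, 9 • rot4 3]] i j *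
        ![![1, 0, 0], ![0, 1, 0],
          ![(-(1/9 : ℚ)) • rot4 1, (-(4/9 : ℚ)) • rot4 3, ((1/9 : ℚ)) • rot4 1]] j k) =
        ![![1, 0, 0], ![0, 1, 0], ![0, 0, 1]] := by
      funext p q
      fin_cases p <;> fin_cases q <;>
        · simp only [← Nat.cast_smul_eq_nsmul ℚ]
          simp [Fin.sum_univ_three, Matrix.mul_smul, Matrix.smul_mul, smul_smul,
            r31, r33, Matrix.vecHead, Matrix.vecTail]
          try norm_num
          try module
    rw [e, blk3_one]
  exact ⟨⟨_, _, h, mul_eq_one_comm.mp h⟩, rfl⟩
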